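/- Let $\lambda_1 < \lambda_2 < \cdots < \lambda_n$ be real numbers, $\sigma > 0$, and $\zeta_1, \dots, \zeta_n$ real numbers with $\zeta_j \ne 0$ for all $j$. Define the rank-one secular function $f(\lambda) = 1 + \sigma \sum_{j=1}^{n} \frac{\zeta_j^2}{\lambda_j - \lambda}$ for $\lambda \notin \{\lambda_1, \dots, \lambda_n\}$. Then: (i) $f$ is strictly increasing on each connected component of $\mathbb{R} \setminus \{\lambda_1, \dots, \lambda_n\}$; (ii) $f$ has exactly one zero in each open interval $(\lambda_i, \lambda_{i+1})$ for $1 \le i \le n-1$; (iii) $f$ has exactly one zero in the interval $(\lambda_n, \lambda_n + \sigma \sum_{j=1}^{n} \zeta_j^2]$ and no zero in $(\lambda_n + \sigma\sum_j \zeta_j^2, \infty)$; and (iv) $f$ has no zero in $(-\infty, \lambda_1)$. -/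

import Mathlib

open Filter Topology Finset


/-- Properties of the rank-one secular function
`f(λ) = 1 + σ ∑ⱼ ζⱼ²/(λⱼ - λ)` with `σ > 0`, all `ζⱼ ≠ 0` and
`λ₁ < ⋯ < λₙ`: (i) `f` is strictly increasing on each connected component of
`ℝ \ {λ₁, …, λₙ}`; (ii) `f` has exactly one zero in each interval
`(λᵢ, λᵢ₊₁)`; (iii) `f` has exactly one zero in `(λₙ, λₙ + σ ∑ ζⱼ²]` and no
zero beyond; (iv) `f` has no zero in `(-∞, λ₁)`. -/
theorem rank_one_secular_properties (n : ℕ) (hn : 0 < n) (lam : Fin n → ℝ)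
    (hlam : StrictMono lam) (σ : ℝ) (hσ : 0 < σ) (ζ : Fin n → ℝ)
    (hζ : ∀ j, ζ j ≠ 0) (f : ℝ → ℝ)
    (hf : ∀ x, f x = 1 + σ * ∑ j, ζ j ^ 2 / (lam j - x)) :
    (∀ x y : ℝ, x < y → (∀ j, lam j ∉ Set.Icc x y) → f x < f y) ∧
      (∀ i j : Fin n, (j : ℕ) = (i : ℕ) + 1 →
        ∃! x, x ∈ Set.Ioo (lam i) (lam j) ∧ f x = 0) ∧
      (∃! x, x ∈ Set.Ioc (lam ⟨n - 1, Nat.sub_lt hn one_pos⟩)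
          (lam ⟨n - 1, Nat.sub_lt hn one_pos⟩ + σ * ∑ j, ζ j ^ 2) ∧ f x = 0) ∧
      (∀ x, lam ⟨n - 1, Nat.sub_lt hn one_pos⟩ + σ * ∑ j, ζ j ^ 2 < x → f x ≠ 0) ∧
      (∀ x, x < lam ⟨0, hn⟩ → f x ≠ 0) := by
  
  have : NeZero n := ⟨hn.ne'⟩
  have hz2 : ∀ j, 0 < ζ j ^ 2 := fun j =>
    lt_of_le_of_ne (sq_nonneg _) (Ne.symm (pow_ne_zero 2 (hζ j)))
  have hfe : f = fun x => 1 + σ * ∑ j, ζ j ^ 2 / (lam j - x) := funext hf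
  -- (i) monotonicity
  have mono : ∀ x y : ℝ, x < y → (∀ j, lam j ∉ Set.Icc x y) → f x < f y := by
    intro x y hxy h
    rw [hf, hf]
    have hsum : ∑ j, ζ j ^ 2 / (lam j - x) < ∑ j, ζ j ^ 2 / (lam j - y) := by
      apply Finset.sum_lt_sum_of_nonempty Finset.univ_nonempty
      intro j _
      rcases lt_or_ge (lam j) x with hj | hj
      · rw [show lam j - x = -(x - lam j) by ring, show lam j - y = -(y - lam j) by ring,
          div_neg, div_neg, neg_lt_neg_iff]
        exact div_lt_div_of_pos_left (hz2 j) (by linarith) (by linarith)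
      · have hj2 : y < lam j := by
          by_contra hc
          exact h j ⟨hj, not_lt.1 hc⟩
        exact div_lt_div_of_pos_left (hz2 j) (by linarith) (by linarith)
    nlinarith
  -- continuity
  have hcont : ∀ s : Set ℝ, (∀ z ∈ s, ∀ j, lam j ≠ z) → ContinuousOn f s := by
    intro s hs
    rw [hfe]
    refine continuousOn_const.add (continuousOn_const.mul ?_)
    refine continuousOn_finset_sum _ (fun j _ => ?_)
    exact continuousOn_const.div ((continuous_const.sub continuous_id).continuousOn)
      (fun z hz => sub_ne_zero.2 (hs z hz j))
  -- splitting off one term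
  have hsplit : ∀ (i : Fin n) (x : ℝ), ∑ j, ζ j ^ 2 / (lam j - x)
      = ζ i ^ 2 / (lam i - x) + ∑ j ∈ Finset.univ.erase i, ζ j ^ 2 / (lam j - x) :=
    fun i x => (Finset.add_sum_erase _ _ (Finset.mem_univ i)).symm
  -- rest is continuous at lam i
  have hrest : ∀ i : Fin n, ∀ l : Filter ℝ, l ≤ 𝓝 (lam i) →
      Tendsto (fun x => ∑ j ∈ Finset.univ.erase i, ζ j ^ 2 / (lam j - x)) l
        (𝓝 (∑ j ∈ Finset.univ.erase i, ζ j ^ 2 / (lam j - lam i))) := by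
    intro i l hl
    refine Tendsto.mono_left ?_ hl
    refine tendsto_finset_sum _ (fun j hj => ?_)
    have hne : lam j - lam i ≠ 0 := by
      have : j ≠ i := Finset.ne_of_mem_erase hj
      exact sub_ne_zero.2 (fun h => this (hlam.injective h))
    exact (tendsto_const_nhds.div ((continuous_const.sub continuous_id).tendsto _) hne)
  -- tendsto atBot from the right of each lam i
  have tendsto_bot : ∀ i : Fin n, Tendsto f (𝓝[>] (lam i)) atBot := by
    intro i
    have hsub : Tendsto (fun x : ℝ => x - lam i) (𝓝[>] (lam i)) (𝓝[>] 0) := by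
      apply tendsto_nhdsWithin_of_tendsto_nhds_of_eventually_within
      · exact ((continuous_id.sub continuous_const).tendsto' _ 0 (by simp)).mono_left
          nhdsWithin_le_nhds
      · filter_upwards [self_mem_nhdsWithin] with x hx
        simpa [sub_pos] using hx
    have h1 : Tendsto (fun x => ζ i ^ 2 / (lam i - x)) (𝓝[>] (lam i)) atBot := by
      have h2 : Tendsto (fun x : ℝ => ζ i ^ 2 * (x - lam i)⁻¹) (𝓝[>] (lam i)) atTop :=
        (tendsto_inv_nhdsGT_zero.comp hsub).const_mul_atTop (hz2 i)
      have heq : (fun x => ζ i ^ 2 / (lam i - x))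
          = fun x : ℝ => -(ζ i ^ 2 * (x - lam i)⁻¹) := by
        funext x
        rw [div_eq_mul_inv, show lam i - x = -(x - lam i) by ring, inv_neg, mul_neg]
      rw [heq]
      exact tendsto_neg_atBot_iff.mpr h2
    have h3 : Tendsto (fun x => ∑ j, ζ j ^ 2 / (lam j - x)) (𝓝[>] (lam i)) atBot := by
      simp only [hsplit i]
      exact ((hrest i _ nhdsWithin_le_nhds).add_atBot h1).congr (fun x => by ring)
    rw [hfe]
    have h4 : Tendsto (fun x => σ * ∑ j, ζ j ^ 2 / (lam j - x)) (𝓝[>] (lam i)) atBot :=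
      h3.const_mul_atBot hσ
    simpa using tendsto_const_nhds.add_atBot h4
  -- tendsto atTop from the left of each lam i
  have tendsto_top : ∀ i : Fin n, Tendsto f (𝓝[<] (lam i)) atTop := by
    intro i
    have hsub : Tendsto (fun x : ℝ => lam i - x) (𝓝[<] (lam i)) (𝓝[>] 0) := by
      apply tendsto_nhdsWithin_of_tendsto_nhds_of_eventually_within
      · exact ((continuous_const.sub continuous_id).tendsto' _ 0 (by simp)).mono_left
          nhdsWithin_le_nhds
      · filter_upwards [self_mem_nhdsWithin] with x hx
        simpa [sub_pos] using hx
    have h1 : Tendsto (fun x => ζ i ^ 2 / (lam i - x)) (𝓝[<] (lam i)) atTop := by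
      have h2 : Tendsto (fun x : ℝ => ζ i ^ 2 * (lam i - x)⁻¹) (𝓝[<] (lam i)) atTop :=
        (tendsto_inv_nhdsGT_zero.comp hsub).const_mul_atTop (hz2 i)
      simpa [div_eq_mul_inv] using h2
    have h3 : Tendsto (fun x => ∑ j, ζ j ^ 2 / (lam j - x)) (𝓝[<] (lam i)) atTop := by
      simp only [hsplit i]
      exact ((hrest i _ nhdsWithin_le_nhds).add_atTop h1).congr (fun x => by ring)
    rw [hfe]
    have h4 : Tendsto (fun x => σ * ∑ j, ζ j ^ 2 / (lam j - x)) (𝓝[<] (lam i)) atTop :=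
      h3.const_mul_atTop hσ
    simpa using tendsto_const_nhds.add_atTop h4
  -- largest eigenvalue facts
  have hNmax : ∀ k : Fin n, lam k ≤ lam ⟨n - 1, Nat.sub_lt hn one_pos⟩ := fun k =>
    hlam.monotone (by rw [Fin.le_def]; simp; omega)
  have hS : 0 < ∑ j, ζ j ^ 2 := Finset.sum_pos (fun j _ => hz2 j) Finset.univ_nonempty
  set L := lam ⟨n - 1, Nat.sub_lt hn one_pos⟩ with hLdef
  set b := L + σ * ∑ j, ζ j ^ 2 with hbdef
  have hLb : L < b := by
    have := mul_pos hσ hS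
    simp only [hbdef]; linarith
  have hfb : 0 ≤ f b := by
    rw [hf]
    have key : ∀ j ∈ Finset.univ, ζ j ^ 2 / (-(σ * ∑ k, ζ k ^ 2)) ≤ ζ j ^ 2 / (lam j - b) := by
      intro j _
      rw [show lam j - b = -(b - lam j) by ring, div_neg, div_neg, neg_le_neg_iff]
      have hj := hNmax j
      exact div_le_div_of_nonneg_left (hz2 j).le (mul_pos hσ hS)
        (by simp only [hbdef]; linarith)
    have h1 := Finset.sum_le_sum key
    rw [← Finset.sum_div] at h1
    have heq : (∑ j, ζ j ^ 2) / (-(σ * ∑ k, ζ k ^ 2)) = -σ⁻¹ := by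
      field_simp
    rw [heq] at h1
    have h3 : σ * σ⁻¹ = 1 := mul_inv_cancel₀ hσ.ne'
    nlinarith
  refine ⟨mono, ?_, ?_, ?_, ?_⟩
  · -- (ii)
    intro i j hij
    have hij' : i < j := by
      rw [Fin.lt_def, hij]; omega
    have hab : lam i < lam j := hlam hij'
    have notin : ∀ k : Fin n, lam k ∉ Set.Ioo (lam i) (lam j) := by
      rintro k ⟨h1, h2⟩
      have hik : i < k := hlam.lt_iff_lt.1 h1
      have hkj : k < j := hlam.lt_iff_lt.1 h2
      rw [Fin.lt_def] at hik hkj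
      omega
    obtain ⟨c2, hc2pos, hc2mem⟩ := (((tendsto_top j).eventually_gt_atTop 0).and
      (eventually_of_mem (Ioo_mem_nhdsLT_of_mem ⟨hab, le_refl _⟩) (fun x hx => hx))).exists
    obtain ⟨c1, hc1neg, hc1mem⟩ := (((tendsto_bot i).eventually_lt_atBot 0).and
      (eventually_of_mem (Ioo_mem_nhdsGT_of_mem ⟨le_refl _, hc2mem.1⟩)
        (fun x hx => hx))).exists
    have hsubI : Set.Icc c1 c2 ⊆ Set.Ioo (lam i) (lam j) := fun z hz =>
      ⟨lt_of_lt_of_le hc1mem.1 hz.1, lt_of_le_of_lt hz.2 hc2mem.2⟩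
    have hcc : ContinuousOn f (Set.Icc c1 c2) := hcont _ (fun z hz k hk =>
      notin k (hk ▸ hsubI hz))
    obtain ⟨c, hcmem, hc0⟩ := intermediate_value_Icc hc1mem.2.le hcc
      ⟨hc1neg.le, hc2pos.le⟩
    have hcIoo : c ∈ Set.Ioo (lam i) (lam j) := hsubI hcmem
    refine ⟨c, ⟨hcIoo, hc0⟩, ?_⟩
    rintro y ⟨hyIoo, hy0⟩
    rcases lt_trichotomy y c with h | h | h
    · exfalso
      have := mono y c h (fun k hk => notin k
        ⟨lt_of_lt_of_le hyIoo.1 hk.1, lt_of_le_of_lt hk.2 hcIoo.2⟩)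
      rw [hy0, hc0] at this
      exact lt_irrefl 0 this
    · exact h
    · exfalso
      have := mono c y h (fun k hk => notin k
        ⟨lt_of_lt_of_le hcIoo.1 hk.1, lt_of_le_of_lt hk.2 hyIoo.2⟩)
      rw [hy0, hc0] at this
      exact lt_irrefl 0 this
  · -- (iii) existence and uniqueness in Ioc L b
    have uniqR : ∀ x y : ℝ, x ∈ Set.Ioc L b → y ∈ Set.Ioc L b → f x = 0 → f y = 0 → x = y := by
      intro x y hx hy hx0 hy0
      rcases lt_trichotomy x y with h | h | h
      · exfalso
        have := mono x y h (fun k hk =>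
          absurd hk.1 (not_le.2 (lt_of_le_of_lt (hNmax k) hx.1)))
        rw [hx0, hy0] at this
        exact lt_irrefl 0 this
      · exact h
      · exfalso
        have := mono y x h (fun k hk =>
          absurd hk.1 (not_le.2 (lt_of_le_of_lt (hNmax k) hy.1)))
        rw [hx0, hy0] at this
        exact lt_irrefl 0 this
    rcases eq_or_lt_of_le hfb with hfb0 | hfb0
    · exact ⟨b, ⟨⟨hLb, le_refl b⟩, hfb0.symm⟩, fun y hy => uniqR y b hy.1 ⟨hLb, le_refl b⟩ hy.2 hfb0.symm⟩
    · obtain ⟨a, haneg, hamem⟩ := ((((tendsto_bot ⟨n - 1, Nat.sub_lt hn one_pos⟩)).eventually_lt_atBot 0).and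
        (eventually_of_mem (Ioo_mem_nhdsGT_of_mem ⟨le_refl _, hLb⟩) (fun x hx => hx))).exists
      have hcc : ContinuousOn f (Set.Icc a b) := hcont _ (fun z hz k hk => by
        have : lam k < a := lt_of_le_of_lt (hNmax k) hamem.1
        exact absurd (hk ▸ hz.1) (not_le.2 this))
      obtain ⟨c, hcmem, hc0⟩ := intermediate_value_Icc hamem.2.le hcc ⟨haneg.le, hfb0.le⟩
      have hcIoc : c ∈ Set.Ioc L b := ⟨lt_of_lt_of_le hamem.1 hcmem.1, hcmem.2⟩
      exact ⟨c, ⟨hcIoc, hc0⟩, fun y hy => uniqR y c hy.1 hcIoc hy.2 hc0⟩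
  · -- no zero beyond b
    intro x hx
    have hfx : f b < f x := mono b x hx (fun k hk =>
      absurd hk.1 (not_le.2 (lt_of_le_of_lt (hNmax k) hLb)))
    exact ne_of_gt (lt_of_le_of_lt hfb hfx)
  · -- (iv)
    intro x hx
    have hxj : ∀ j, x < lam j := fun j =>
      lt_of_lt_of_le hx (hlam.monotone (by rw [Fin.le_def]; simp))
    have hpos : 0 < ∑ j, ζ j ^ 2 / (lam j - x) :=
      Finset.sum_pos (fun j _ => div_pos (hz2 j) (sub_pos.2 (hxj j))) Finset.univ_nonempty
    rw [hf]
    nlinarith
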